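/- Let k be an algebraically closed field of characteristic zero, and let F ∈ k[[z]] have order at least 2. If A and B of order at least 2 are compositional right factors of F (i.e., F = X ∘ A and F = Y ∘ B for some X, Y in z·k[[z]]), then every φ_A with A ∘ φ_A = A (φ_A of order 1) commutes under composition with every φ_B with B ∘ φ_B = B (φ_B of order 1). -/

import Mathlib

open PowerSeries

/-- Composition (substitution) `comp A B = A ∘ B` of formal power series,
the standard coefficient formula, well-behaved when `B` has zero constant term. -/
noncomputable def comp {k : Type*} [Field k] (A B : PowerSeries k) : PowerSeries k :=
  PowerSeries.mk fun n =>
    ∑ i ∈ Finset.range (n + 1), (PowerSeries.coeff i A) * (PowerSeries.coeff n (B ^ i))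

/-- `iterComp φ j` is the `j`-fold compositional iterate `φ^{∘j}` (with `φ^{∘0} = z`). -/
noncomputable def iterComp {k : Type*} [Field k] (φ : PowerSeries k) : ℕ → PowerSeries k
  | 0 => PowerSeries.X
  | n + 1 => comp φ (iterComp φ n)

/-- Composition of a list of power series: `compList [A₁, …, A_r] = A₁ ∘ ⋯ ∘ A_r`. -/
noncomputable def compList {k : Type*} [Field k] : List (PowerSeries k) → PowerSeries k
  | [] => PowerSeries.X
  | a :: t => comp a (compList t)

namespace StmtAux

open Finset

variable {k : Type*} [Field k]

lemma coeff_comp (A B : PowerSeries k) (n : ℕ) :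
    coeff n (comp A B) = ∑ i ∈ range (n + 1), coeff i A * coeff n (B ^ i) := by
  rw [comp, coeff_mk]

lemma coeff_pow_zero {B : PowerSeries k} (hB : constantCoeff B = 0) {i j : ℕ} (h : i < j) :
    coeff i (B ^ j) = 0 :=
  X_pow_dvd_iff.mp (pow_dvd_pow_of_dvd (X_dvd_iff.mpr hB) j) i h

lemma coeff_aeval {B : PowerSeries k} (hB : constantCoeff B = 0) (P : Polynomial k) (n : ℕ) :
    coeff n (Polynomial.aeval B P) = ∑ i ∈ range (n + 1), P.coeff i * coeff n (B ^ i) := by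
  rw [Polynomial.aeval_eq_sum_range'
    (lt_of_lt_of_le (Nat.lt_succ_self _) (le_max_left (P.natDegree + 1) (n + 1))) B, map_sum]
  simp_rw [LinearMap.map_smul, smul_eq_mul]
  symm
  apply Finset.sum_subset (Finset.range_subset_range.mpr (le_max_right _ _))
  intro i hi hi'
  rw [coeff_pow_zero hB (by simp only [mem_range] at hi'; omega), mul_zero]

lemma coeff_comp_of_trunc {B : PowerSeries k} (hB : constantCoeff B = 0) (A : PowerSeries k)
    {n N : ℕ} (h : n < N) :
    coeff n (comp A B) = coeff n (Polynomial.aeval B (trunc N A)) := by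
  rw [coeff_aeval hB, coeff_comp]
  refine Finset.sum_congr rfl fun i hi => ?_
  rw [coeff_trunc, if_pos (by simp only [mem_range] at hi; omega)]

lemma comp_mul {C : PowerSeries k} (hC : constantCoeff C = 0) (A B : PowerSeries k) :
    comp (A * B) C = comp A C * comp B C := by
  ext n
  rw [coeff_comp_of_trunc hC _ (Nat.lt_succ_self n)]
  have key : coeff n (Polynomial.aeval C (trunc (n + 1) (A * B)))
      = coeff n (Polynomial.aeval C (trunc (n + 1) A * trunc (n + 1) B)) := by
    rw [coeff_aeval hC, coeff_aeval hC]
    refine Finset.sum_congr rfl fun i hi => ?_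
    congr 1
    rw [coeff_trunc, if_pos (mem_range.mp hi), Polynomial.coeff_mul, PowerSeries.coeff_mul]
    refine Finset.sum_congr rfl fun p hp => ?_
    have hp' := Finset.HasAntidiagonal.mem_antidiagonal.mp hp
    have hin : i < n + 1 := mem_range.mp hi
    rw [coeff_trunc, coeff_trunc, if_pos (by omega), if_pos (by omega)]
  rw [key, map_mul, PowerSeries.coeff_mul, PowerSeries.coeff_mul]
  refine Finset.sum_congr rfl fun p hp => ?_
  have hp' := Finset.HasAntidiagonal.mem_antidiagonal.mp hp
  rw [coeff_comp_of_trunc hC A (show p.1 < n + 1 by omega),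
      coeff_comp_of_trunc hC B (show p.2 < n + 1 by omega)]

lemma comp_one (C : PowerSeries k) : comp (1 : PowerSeries k) C = 1 := by
  ext n
  rw [coeff_comp, Finset.sum_eq_single 0]
  · simp
  · intro i _ hne
    rw [PowerSeries.coeff_one, if_neg hne, zero_mul]
  · intro h
    simp at h

lemma comp_pow {C : PowerSeries k} (hC : constantCoeff C = 0) (A : PowerSeries k) (j : ℕ) :
    comp (A ^ j) C = (comp A C) ^ j := by
  induction j with
  | zero => simpa using comp_one C
  | succ j ih => rw [pow_succ, comp_mul hC, ih, pow_succ]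

lemma constantCoeff_comp (A B : PowerSeries k) :
    constantCoeff (comp A B) = constantCoeff A := by
  rw [← coeff_zero_eq_constantCoeff_apply, ← coeff_zero_eq_constantCoeff_apply, coeff_comp]
  simp

lemma coeff_one_comp (A B : PowerSeries k) :
    coeff 1 (comp A B) = coeff 1 A * coeff 1 B := by
  rw [coeff_comp]
  rw [show (1 : ℕ) + 1 = 2 from rfl, Finset.sum_range_succ, Finset.sum_range_one]
  simp [PowerSeries.coeff_one]

lemma comp_assoc (f g h : PowerSeries k) (hg : constantCoeff g = 0)
    (hh : constantCoeff h = 0) :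
    comp (comp f g) h = comp f (comp g h) := by
  ext n
  rw [coeff_comp, coeff_comp]
  calc
    ∑ i ∈ range (n + 1), coeff i (comp f g) * coeff n (h ^ i)
        = ∑ i ∈ range (n + 1), ∑ j ∈ range (n + 1),
            coeff j f * coeff i (g ^ j) * coeff n (h ^ i) := by
      refine Finset.sum_congr rfl fun i hi => ?_
      rw [coeff_comp, Finset.sum_mul]
      apply Finset.sum_subset (Finset.range_subset_range.mpr (by simp only [mem_range] at hi; omega))
      intro j hj hj'
      rw [coeff_pow_zero hg (by simp only [mem_range] at hj hj'; omega), mul_zero, zero_mul]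
    _ = ∑ j ∈ range (n + 1), coeff j f * coeff n ((comp g h) ^ j) := by
      rw [Finset.sum_comm]
      refine Finset.sum_congr rfl fun j hj => ?_
      rw [← comp_pow hh, coeff_comp, Finset.mul_sum]
      refine Finset.sum_congr rfl fun i hi => ?_
      ring

lemma comp_right_ext [CharZero k] {F ψ1 ψ2 : PowerSeries k}
    (hF : F ≠ 0) (hF0 : constantCoeff F = 0)
    (h1 : constantCoeff ψ1 = 0) (h2 : constantCoeff ψ2 = 0)
    (hl : coeff 1 ψ1 = coeff 1 ψ2) (hl0 : coeff 1 ψ1 ≠ 0)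
    (hc : comp F ψ1 = comp F ψ2) : ψ1 = ψ2 := by
  classical
  by_contra hne
  have hD : ψ2 - ψ1 ≠ 0 := sub_ne_zero.mpr (Ne.symm hne)
  have hexF : ∃ n, coeff n F ≠ 0 := by
    by_contra hx
    push_neg at hx
    exact hF (PowerSeries.ext fun n => by simp [hx n])
  have hexD : ∃ m, coeff m (ψ2 - ψ1) ≠ 0 := by
    by_contra hx
    push_neg at hx
    exact hD (PowerSeries.ext fun n => by simp [hx n])
  obtain ⟨n, hFn, hFmin⟩ : ∃ n, coeff n F ≠ 0 ∧ ∀ i, i < n → coeff i F = 0 :=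
    ⟨Nat.find hexF, Nat.find_spec hexF, fun i hi => not_not.mp (Nat.find_min hexF hi)⟩
  obtain ⟨m, hDm, hDmin⟩ : ∃ m, coeff m (ψ2 - ψ1) ≠ 0 ∧
      ∀ i, i < m → coeff i (ψ2 - ψ1) = 0 :=
    ⟨Nat.find hexD, Nat.find_spec hexD, fun i hi => not_not.mp (Nat.find_min hexD hi)⟩
  have hn1 : 1 ≤ n := by
    rcases Nat.eq_zero_or_pos n with h | h
    · exfalso
      apply hFn
      rw [h, coeff_zero_eq_constantCoeff_apply, hF0]
    · exact h
  have hm2 : 2 ≤ m := by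
    by_contra hcon
    have hm01 : m = 0 ∨ m = 1 := by omega
    rcases hm01 with h | h
    · apply hDm
      rw [h, coeff_zero_eq_constantCoeff_apply, map_sub, h1, h2, sub_zero]
    · apply hDm
      rw [h, map_sub, hl, sub_self]
  obtain ⟨e, rfl⟩ : ∃ e, m = e + 1 := ⟨m - 1, by omega⟩
  have he1 : 1 ≤ e := by omega
  obtain ⟨D', hD'⟩ : ∃ D', ψ2 - ψ1 = X ^ (e + 1) * D' := X_pow_dvd_iff.mpr hDmin
  have hc0 : constantCoeff D' ≠ 0 := by
    intro h
    apply hDm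
    rw [hD', coeff_X_pow_mul', if_pos le_rfl, Nat.sub_self,
      coeff_zero_eq_constantCoeff_apply, h]
  obtain ⟨u, hu⟩ : ∃ u, ψ1 = X * u := X_dvd_iff.mpr h1
  obtain ⟨v, hv⟩ : ∃ v, ψ2 = X * v := X_dvd_iff.mpr h2
  have hlu : constantCoeff u = coeff 1 ψ1 := by
    rw [hu, ← pow_one (X : PowerSeries k), coeff_X_pow_mul', if_pos le_rfl, Nat.sub_self,
      coeff_zero_eq_constantCoeff_apply]
  have hlv : constantCoeff v = constantCoeff u := by
    rw [hlu, hl, hv, ← pow_one (X : PowerSeries k), coeff_X_pow_mul', if_pos le_rfl,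
      Nat.sub_self, coeff_zero_eq_constantCoeff_apply]
  have main : ∀ j, 1 ≤ j → ψ2 ^ j - ψ1 ^ j
      = X ^ (j - 1 + (e + 1)) * ((∑ i ∈ range j, v ^ i * u ^ (j - 1 - i)) * D') := by
    intro j hj
    rw [← geom_sum₂_mul ψ2 ψ1 j, hD']
    have hsum : (∑ i ∈ range j, ψ2 ^ i * ψ1 ^ (j - 1 - i))
        = X ^ (j - 1) * ∑ i ∈ range j, v ^ i * u ^ (j - 1 - i) := by
      rw [Finset.mul_sum]
      refine Finset.sum_congr rfl fun i hi => ?_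
      have hi' : i < j := mem_range.mp hi
      calc ψ2 ^ i * ψ1 ^ (j - 1 - i)
          = (X ^ i * X ^ (j - 1 - i)) * (v ^ i * u ^ (j - 1 - i)) := by
            rw [hu, hv, mul_pow, mul_pow]; ring
        _ = X ^ (j - 1) * (v ^ i * u ^ (j - 1 - i)) := by
            rw [← pow_add]
            congr 2
            omega
    rw [hsum, pow_add]
    ring
  have hcd := congrArg (coeff (n + e)) hc
  rw [coeff_comp, coeff_comp] at hcd
  have hzero : ∑ j ∈ range (n + e + 1),
      coeff j F * (coeff (n + e) (ψ2 ^ j) - coeff (n + e) (ψ1 ^ j)) = 0 := by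
    simp_rw [mul_sub]
    rw [Finset.sum_sub_distrib, hcd, sub_self]
  have hsingle : ∑ j ∈ range (n + e + 1),
      coeff j F * (coeff (n + e) (ψ2 ^ j) - coeff (n + e) (ψ1 ^ j))
      = coeff n F * (coeff (n + e) (ψ2 ^ n) - coeff (n + e) (ψ1 ^ n)) := by
    apply Finset.sum_eq_single_of_mem n (mem_range.mpr (by omega))
    intro j hj hjn
    rcases Nat.lt_or_ge j n with h | h
    · rw [hFmin j h, zero_mul]
    · have hjn' : n < j := lt_of_le_of_ne h (Ne.symm hjn)
      have h1j : 1 ≤ j := by omega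
      rw [show coeff (n + e) (ψ2 ^ j) - coeff (n + e) (ψ1 ^ j)
          = coeff (n + e) (ψ2 ^ j - ψ1 ^ j) from (map_sub _ _ _).symm,
        main j h1j, coeff_X_pow_mul', if_neg (by omega), mul_zero]
  have hval : coeff (n + e) (ψ2 ^ n) - coeff (n + e) (ψ1 ^ n)
      = ((n : k) * (constantCoeff u) ^ (n - 1)) * constantCoeff D' := by
    rw [show coeff (n + e) (ψ2 ^ n) - coeff (n + e) (ψ1 ^ n)
        = coeff (n + e) (ψ2 ^ n - ψ1 ^ n) from (map_sub _ _ _).symm,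
      main n hn1, coeff_X_pow_mul', if_pos (by omega),
      show n + e - (n - 1 + (e + 1)) = 0 by omega,
      coeff_zero_eq_constantCoeff_apply, map_mul, map_sum]
    congr 1
    calc ∑ i ∈ range n, constantCoeff (v ^ i * u ^ (n - 1 - i))
        = ∑ _i ∈ range n, (constantCoeff u) ^ (n - 1) := by
          refine Finset.sum_congr rfl fun i hi => ?_
          have hi' : i < n := mem_range.mp hi
          rw [map_mul, map_pow, map_pow, hlv, ← pow_add]
          congr 1
          omega
      _ = (n : k) * (constantCoeff u) ^ (n - 1) := by
          rw [Finset.sum_const, card_range, nsmul_eq_mul]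
  rw [hsingle, hval] at hzero
  have hn0 : (n : k) ≠ 0 := Nat.cast_ne_zero.mpr (by omega)
  have hlam : constantCoeff u ≠ 0 := by rw [hlu]; exact hl0
  exact mul_ne_zero hFn (mul_ne_zero (mul_ne_zero hn0 (pow_ne_zero _ hlam)) hc0) hzero

end StmtAux

open StmtAux in
theorem stmt12 {k : Type*} [Field k] [IsAlgClosed k] [CharZero k]
    (F A B : PowerSeries k)
    (hF : F ≠ 0) (hF2 : 2 ≤ F.order) (hA : A ≠ 0) (hA2 : 2 ≤ A.order)
    (hB : B ≠ 0) (hB2 : 2 ≤ B.order)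
    (hFA : ∃ Xs : PowerSeries k, constantCoeff Xs = 0 ∧ F = comp Xs A)
    (hFB : ∃ Ys : PowerSeries k, constantCoeff Ys = 0 ∧ F = comp Ys B)
    (φA φB : PowerSeries k) (hφA : φA.order = 1) (hφA2 : comp A φA = A)
    (hφB : φB.order = 1) (hφB2 : comp B φB = B) :
    comp φA φB = comp φB φA := by
  have cF : constantCoeff F = 0 := by
    have := PowerSeries.coeff_of_lt_order 0 (lt_of_lt_of_le (by norm_num) hF2)
    simpa using this
  have cA : constantCoeff A = 0 := by
    have := PowerSeries.coeff_of_lt_order 0 (lt_of_lt_of_le (by norm_num) hA2)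
    simpa using this
  have cB : constantCoeff B = 0 := by
    have := PowerSeries.coeff_of_lt_order 0 (lt_of_lt_of_le (by norm_num) hB2)
    simpa using this
  have cφA : constantCoeff φA = 0 := by
    have := PowerSeries.coeff_of_lt_order (φ := φA) 0 (by rw [hφA]; norm_num)
    simpa using this
  have cφB : constantCoeff φB = 0 := by
    have := PowerSeries.coeff_of_lt_order (φ := φB) 0 (by rw [hφB]; norm_num)
    simpa using this
  have lφA : coeff 1 φA ≠ 0 :=
    (PowerSeries.order_eq_nat.mp (by exact_mod_cast hφA)).1
  have lφB : coeff 1 φB ≠ 0 :=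
    (PowerSeries.order_eq_nat.mp (by exact_mod_cast hφB)).1
  obtain ⟨Xs, hXs0, hXs⟩ := hFA
  obtain ⟨Ys, hYs0, hYs⟩ := hFB
  have hFφA : comp F φA = F := by rw [hXs, comp_assoc _ _ _ cA cφA, hφA2]
  have hFφB : comp F φB = F := by rw [hYs, comp_assoc _ _ _ cB cφB, hφB2]
  have h1 : comp F (comp φA φB) = F := by
    rw [← comp_assoc _ _ _ cφA cφB, hFφA, hFφB]
  have h2 : comp F (comp φB φA) = F := by
    rw [← comp_assoc _ _ _ cφB cφA, hFφB, hFφA]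
  apply comp_right_ext hF cF
  · rw [constantCoeff_comp]; exact cφA
  · rw [constantCoeff_comp]; exact cφB
  · rw [coeff_one_comp, coeff_one_comp, mul_comm]
  · rw [coeff_one_comp]; exact mul_ne_zero lφA lφB
  · rw [h1, h2]
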